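/- (a) For every Φ ∈ H(G,K,V*) and every m ∈ M, the formula 𝒮(Φ)(m)(λ) := Σ_{n(N∩K) ∈ N/(N∩K)} Φ(mn)(λ), for λ ∈ (V*)^{N∩K}, has only finitely many nonzero terms, is independent of the coset representatives, maps (V*)^{N∩K} into itself, and defines an element 𝒮(Φ) of H(M, K∩M, (V*)^{N∩K}). (b) For every Φ ∈ H(G,K,V*), every m ∈ M, every v ∈ V and every λ ∈ (V*)^{N∩K}, one has λ(𝒮'(ι(Φ))(m)(v̄)) = (𝒮(Φ)(m⁻¹)(λ))(v), where on the left λ is viewed as a linear form on V_{K∩N}; equivalently, ι_M ∘ 𝒮 = 𝒮' ∘ ι as maps H(G,K,V*) → H(M, K∩M, V_{K∩N}). -/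

import Mathlib

open scoped Classical

noncomputable section
namespace Paper

variable {C : Type} [Field C] {G : Type} [Group G]

/-- Hecke algebra H(G,K,V) as a submodule of `G → End V`. -/
def Hecke (K : Subgroup G) {V : Type} [AddCommGroup V] [Module C V]
    (ρ : Representation C ↥K V) : Submodule C (G → Module.End C V) where
  carrier := {Φ | (∀ (k k' : ↥K) (g : G), Φ (↑k * g * ↑k') = ρ k * Φ g * ρ k') ∧
    ∃ S : Finset G, ∀ g : G, Φ g ≠ 0 → ∃ s ∈ S, ∃ k ∈ K, ∃ k' ∈ K, g = k * s * k'}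
  add_mem' := by
    rintro a b ⟨ha1, Sa, ha2⟩ ⟨hb1, Sb, hb2⟩
    refine ⟨fun k k' g => by simp [ha1 k k' g, hb1 k k' g, mul_add, add_mul],
      Sa ∪ Sb, fun g hg => ?_⟩
    by_cases h : a g ≠ 0
    · obtain ⟨s, hs, hrest⟩ := ha2 g h
      exact ⟨s, Finset.mem_union_left _ hs, hrest⟩
    · push_neg at h
      have hbg : b g ≠ 0 := by
        intro hb0; apply hg; simp only [Pi.add_apply, h, hb0, add_zero]
      obtain ⟨s, hs, hrest⟩ := hb2 g hbg
      exact ⟨s, Finset.mem_union_right _ hs, hrest⟩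
  zero_mem' := ⟨fun k k' g => by simp, ∅, fun g hg => absurd rfl hg⟩
  smul_mem' := by
    rintro c a ⟨ha1, Sa, ha2⟩
    refine ⟨fun k k' g => by
      simp only [Pi.smul_apply, ha1 k k' g, mul_smul_comm, smul_mul_assoc],
      Sa, fun g hg => ?_⟩
    refine ha2 g (fun h0 => hg ?_)
    simp only [Pi.smul_apply, h0, smul_zero]

/-- The subspace of `V` spanned by the elements `ρ(n)v - v`, `n ∈ K ⊓ N`. -/
def coinvKer (K N : Subgroup G) {V : Type} [AddCommGroup V] [Module C V]
    (ρ : Representation C ↥K V) : Submodule C V :=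
  Submodule.span C {x | ∃ (n : G) (hn : n ∈ K ⊓ N) (v : V), x = ρ ⟨n, hn.1⟩ v - v}

/-- Transpose of an endomorphism of the dual, as an endomorphism of `V`. -/
def transEnd {V : Type} [AddCommGroup V] [Module C V] [FiniteDimensional C V]
    (u : Module.End C (Module.Dual C V)) : Module.End C V :=
  (Module.evalEquiv C V).symm.toLinearMap ∘ₗ u.dualMap ∘ₗ (Module.evalEquiv C V).toLinearMap

/-- The `N ⊓ K`-fixed linear forms `(V^*)^{N ⊓ K}`. -/
def dualInv (K N : Subgroup G) {V : Type} [AddCommGroup V] [Module C V]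
    (ρ : Representation C ↥K V) : Submodule C (Module.Dual C V) where
  carrier := {l | ∀ (n : G) (hn : n ∈ K ⊓ N), ρ.dual ⟨n, hn.1⟩ l = l}
  add_mem' := by intro a b ha hb n hn; rw [map_add, ha n hn, hb n hn]
  zero_mem' := by intro n hn; rw [map_zero]
  smul_mem' := by intro c a ha n hn; rw [map_smul, ha n hn]


section Aux

variable {V : Type} [AddCommGroup V] [Module C V]
variable {K N : Subgroup G} {ρ : Representation C ↥K V}
variable {Φ : G → Module.End C (Module.Dual C V)}

lemma hecke_cases (hΦ : Φ ∈ Hecke K ρ.dual) :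
    (∀ (k k' : ↥K) (g : G), Φ (↑k * g * ↑k') = ρ.dual k * Φ g * ρ.dual k') ∧
    ∃ S : Finset G, ∀ g : G, Φ g ≠ 0 → ∃ s ∈ S, ∃ k ∈ K, ∃ k' ∈ K, g = k * s * k' := hΦ

lemma hecke_right (hΦ : Φ ∈ Hecke K ρ.dual) (g c : G) (hc : c ∈ K) :
    Φ (g * c) = Φ g * ρ.dual ⟨c, hc⟩ := by
  have h := (hecke_cases hΦ).1 1 ⟨c, hc⟩ g
  rw [map_one ρ.dual, one_mul] at h
  simpa using h

lemma hecke_left (hΦ : Φ ∈ Hecke K ρ.dual) (g c : G) (hc : c ∈ K) :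
    Φ (c * g) = ρ.dual ⟨c, hc⟩ * Φ g := by
  have h := (hecke_cases hΦ).1 ⟨c, hc⟩ 1 g
  rw [map_one ρ.dual, mul_one] at h
  simpa using h

lemma hecke_coset (hΦ : Φ ∈ Hecke K ρ.dual) {l : Module.Dual C V}
    (hl : l ∈ dualInv K N ρ) (g c : G) (hc : c ∈ K ⊓ N) :
    Φ (g * c) l = Φ g l := by
  rw [hecke_right hΦ g c hc.1]
  show Φ g (ρ.dual ⟨c, hc.1⟩ l) = Φ g l
  rw [hl c hc]

lemma hecke_ne_zero (hΦ : Φ ∈ Hecke K ρ.dual) (g c : G) (hc : c ∈ K) :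
    Φ (g * c) = 0 ↔ Φ g = 0 := by
  constructor
  · intro h0
    have : Φ g = Φ ((g * c) * c⁻¹) := by rw [mul_inv_cancel_right]
    rw [this, hecke_right hΦ _ _ (K.inv_mem hc), h0, zero_mul]
  · intro h0
    rw [hecke_right hΦ g c hc, h0, zero_mul]

/-- A quotient equivalence induced by a compatible equivalence of the group. -/
def quotMapEquiv {H : Type} [Group H] (s : Subgroup H) (φ : H ≃ H)
    (hc : ∀ a b : H, a⁻¹ * b ∈ s → (φ a)⁻¹ * (φ b) ∈ s)
    (hc' : ∀ a b : H, a⁻¹ * b ∈ s → (φ.symm a)⁻¹ * (φ.symm b) ∈ s) :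
    (H ⧸ s) ≃ (H ⧸ s) where
  toFun := Quotient.map' φ (fun a b h => by
    rw [QuotientGroup.leftRel_apply] at *; exact hc a b h)
  invFun := Quotient.map' φ.symm (fun a b h => by
    rw [QuotientGroup.leftRel_apply] at *; exact hc' a b h)
  left_inv := fun q => Quotient.inductionOn' q (fun a => by
    simp [Quotient.map'_mk''])
  right_inv := fun q => Quotient.inductionOn' q (fun a => by
    simp [Quotient.map'_mk''])

lemma quotMapEquiv_mk {H : Type} [Group H] (s : Subgroup H) (φ : H ≃ H)
    (hc : ∀ a b : H, a⁻¹ * b ∈ s → (φ a)⁻¹ * (φ b) ∈ s)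
    (hc' : ∀ a b : H, a⁻¹ * b ∈ s → (φ.symm a)⁻¹ * (φ.symm b) ∈ s) (a : H) :
    quotMapEquiv s φ hc hc' (QuotientGroup.mk a) = QuotientGroup.mk (φ a) :=
  rfl

/-- Reindexing a coset-sum along a map covering a bijection of the quotient. -/
lemma finsum_reindex {X : Type} [AddCommMonoid X] {H : Type} [Group H] {s : Subgroup H}
    (F : H → X) (hF : ∀ (n c : H), c ∈ s → F (n * c) = F n)
    (ψ : H → H) (e : (H ⧸ s) ≃ (H ⧸ s))
    (he : ∀ q : H ⧸ s, QuotientGroup.mk (ψ (Quotient.out q)) = e q) :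
    ∑ᶠ q : H ⧸ s, F (ψ (Quotient.out q)) = ∑ᶠ q : H ⧸ s, F (Quotient.out q) := by
  have h1 : ∀ q : H ⧸ s, F (ψ (Quotient.out q)) = F (Quotient.out (e q)) := by
    intro q
    have h2 : (QuotientGroup.mk (ψ (Quotient.out q)) : H ⧸ s)
        = QuotientGroup.mk (Quotient.out (e q)) := by
      rw [he q, QuotientGroup.out_eq']
    rw [QuotientGroup.eq] at h2
    have h3 : Quotient.out (e q)
        = ψ (Quotient.out q) * ((ψ (Quotient.out q))⁻¹ * Quotient.out (e q)) := by
      rw [mul_inv_cancel_left]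
    rw [h3, hF _ _ h2]
  rw [finsum_congr h1]
  exact finsum_comp_equiv (f := fun q => F (Quotient.out q)) e

/-- Finiteness of the support of `q ↦ Φ (g₀ * out q)` on the quotient. -/
lemma fin_support (hΦ : Φ ∈ Hecke K ρ.dual)
    (hA1' : ∀ g : G, ∃ S : Finset G, ∀ x : G,
      (∃ k ∈ K, ∃ k' ∈ K, x = k * g * k') → ∃ s ∈ S, ∃ k ∈ K, x = s * k)
    (g₀ : G) :
    {q : ↥N ⧸ (K ⊓ N).subgroupOf N | Φ (g₀ * ↑(Quotient.out q)) ≠ 0}.Finite := by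
  obtain ⟨hΦ1, S, hS⟩ := hecke_cases hΦ
  choose T hT using hA1'
  have key : ∀ g : G, Φ g ≠ 0 → ∃ t ∈ S.biUnion T, ∃ k ∈ K, g = t * k := by
    intro g hg
    obtain ⟨s, hs, k, hk, k', hk', hgeq⟩ := hS g hg
    obtain ⟨t, ht, k₂, hk₂, hx⟩ := hT s g ⟨k, hk, k', hk', hgeq⟩
    exact ⟨t, Finset.mem_biUnion.2 ⟨s, hs, ht⟩, k₂, hk₂, hx⟩
  set A := {q : ↥N ⧸ (K ⊓ N).subgroupOf N | Φ (g₀ * ↑(Quotient.out q)) ≠ 0} with hA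
  let f : (↥N ⧸ (K ⊓ N).subgroupOf N) → G := fun q =>
    if h : Φ (g₀ * ↑(Quotient.out q)) ≠ 0 then (key _ h).choose else 1
  have hspec : ∀ q ∈ A, f q ∈ S.biUnion T ∧ ∃ k ∈ K, g₀ * ↑(Quotient.out q) = f q * k := by
    intro q hq
    have hq' : Φ (g₀ * ↑(Quotient.out q)) ≠ 0 := hq
    simp only [f, dif_pos hq']
    obtain ⟨h1, k, hk, hek⟩ := (key _ hq').choose_spec
    exact ⟨h1, k, hk, hek⟩
  apply Set.Finite.of_finite_image (f := f)
  · apply Set.Finite.subset (S.biUnion T).finite_toSet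
    rintro x ⟨q, hq, rfl⟩
    exact (hspec q hq).1
  · intro q hq q' hq' hfq
    obtain ⟨-, k, hk, hqe⟩ := hspec q hq
    obtain ⟨-, k', hk', hqe'⟩ := hspec q' hq'
    rw [hfq] at hqe
    have hout : (↑(Quotient.out q) : G)⁻¹ * ↑(Quotient.out q') = k⁻¹ * k' := by
      have e1 : (↑(Quotient.out q) : G) = g₀⁻¹ * (f q' * k) := by
        rw [← hqe, inv_mul_cancel_left]
      have e2 : (↑(Quotient.out q') : G) = g₀⁻¹ * (f q' * k') := by
        rw [← hqe', inv_mul_cancel_left]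
      rw [e1, e2]; group
    have hmem : (Quotient.out q)⁻¹ * Quotient.out q' ∈ (K ⊓ N).subgroupOf N := by
      rw [Subgroup.mem_subgroupOf]
      refine ⟨?_, ?_⟩
      · show ((((Quotient.out q))⁻¹ * Quotient.out q' : ↥N) : G) ∈ K
        push_cast
        rw [hout]
        exact K.mul_mem (K.inv_mem hk) hk' 
      · exact ((Quotient.out q)⁻¹ * Quotient.out q').2
    calc q = QuotientGroup.mk (Quotient.out q) := (QuotientGroup.out_eq' q).symm
      _ = QuotientGroup.mk (Quotient.out q') := QuotientGroup.eq.2 hmem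
      _ = q' := QuotientGroup.out_eq' q'

lemma coset_const (hΦ : Φ ∈ Hecke K ρ.dual) {l : Module.Dual C V}
    (hl : l ∈ dualInv K N ρ) (g₀ : G) :
    ∀ (n c : ↥N), c ∈ (K ⊓ N).subgroupOf N → Φ (g₀ * ↑(n * c)) l = Φ (g₀ * ↑n) l := by
  intro n c hc
  have h1 : g₀ * ↑(n * c) = (g₀ * ↑n) * ↑c := by push_cast; group
  rw [h1]
  exact hecke_coset hΦ hl _ _ (Subgroup.mem_subgroupOf.1 hc)

lemma fin_support_apply (hΦ : Φ ∈ Hecke K ρ.dual)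
    (hA1' : ∀ g : G, ∃ S : Finset G, ∀ x : G,
      (∃ k ∈ K, ∃ k' ∈ K, x = k * g * k') → ∃ s ∈ S, ∃ k ∈ K, x = s * k)
    (g₀ : G) (l : Module.Dual C V) :
    (Function.support fun q : ↥N ⧸ (K ⊓ N).subgroupOf N =>
      Φ (g₀ * ↑(Quotient.out q)) l).Finite := by
  apply (fin_support hΦ hA1' g₀).subset
  intro q hq
  simp only [Function.mem_support] at hq
  simp only [Set.mem_setOf_eq]
  intro h0; exact hq (by rw [h0]; simp)

lemma dualInv_dual {M : Subgroup G}
    (hnorm : ∀ (m : ↥(K ⊓ M)) (n' : G), n' ∈ K ⊓ N → ↑m * n' * (↑m)⁻¹ ∈ K ⊓ N)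
    {l : Module.Dual C V} (hl : l ∈ dualInv K N ρ) (k : G) (hk : k ∈ K ⊓ M) :
    ρ.dual ⟨k, hk.1⟩ l ∈ dualInv K N ρ := by
  intro n hn
  have hc : k⁻¹ * n * k ∈ K ⊓ N := by
    have := hnorm (⟨k, hk⟩ : ↥(K ⊓ M))⁻¹ n hn
    simpa using this
  have h1 : ((⟨n, hn.1⟩ : ↥K) * ⟨k, hk.1⟩ : ↥K) = (⟨k, hk.1⟩ : ↥K) * ⟨k⁻¹ * n * k, hc.1⟩ := by
    ext
    show n * k = k * (k⁻¹ * n * k)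
    group
  show ρ.dual ⟨n, hn.1⟩ (ρ.dual ⟨k, hk.1⟩ l) = ρ.dual ⟨k, hk.1⟩ l
  rw [← Module.End.mul_apply, ← map_mul, h1, map_mul, Module.End.mul_apply, hl _ hc]

lemma transEnd_apply {V : Type} [AddCommGroup V] [Module C V] [FiniteDimensional C V]
    (u : Module.End C (Module.Dual C V)) (v : V) (l : Module.Dual C V) :
    l (transEnd u v) = (u l) v := by
  simp [transEnd]

lemma transEnd_zero {V : Type} [AddCommGroup V] [Module C V] [FiniteDimensional C V] :
    transEnd (0 : Module.End C (Module.Dual C V)) = 0 := by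
  ext v
  have h0 : (0 : Module.End C (Module.Dual C V)).dualMap = 0 := by
    ext φ x
    simp [LinearMap.dualMap_apply]
  show (Module.evalEquiv C V).symm ((0 : Module.End C (Module.Dual C V)).dualMap
    ((Module.evalEquiv C V) v)) = 0
  rw [h0]
  simp

end Aux

section Parts

variable {V : Type} [AddCommGroup V] [Module C V]
variable {K N : Subgroup G} {ρ : Representation C ↥K V}
variable {Φ : G → Module.End C (Module.Dual C V)}

/-- Part (a), stability of `dualInv` under the sum. -/
lemma mSat_stable (hΦ : Φ ∈ Hecke K ρ.dual) {l : Module.Dual C V}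
    (hl : l ∈ dualInv K N ρ)
    (hA1' : ∀ g : G, ∃ S : Finset G, ∀ x : G,
      (∃ k ∈ K, ∃ k' ∈ K, x = k * g * k') → ∃ s ∈ S, ∃ k ∈ K, x = s * k)
    (m₀ : G)
    (hm : ∀ n' : G, n' ∈ K ⊓ N → m₀⁻¹ * n' * m₀ ∈ N) :
    (∑ᶠ q : ↥N ⧸ (K ⊓ N).subgroupOf N, Φ (m₀ * ↑(Quotient.out q)) l)
      ∈ dualInv K N ρ := by
  intro n' hn'
  set F : ↥N → Module.Dual C V := fun n => Φ (m₀ * ↑n) l with hFdef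
  set d : ↥N := ⟨m₀⁻¹ * n' * m₀, hm n' hn'⟩ with hd
  have hgen : ∀ (d : ↥N) (a b : ↥N), a⁻¹ * b ∈ (K ⊓ N).subgroupOf N →
      (d * a)⁻¹ * (d * b) ∈ (K ⊓ N).subgroupOf N := by
    intro d a b h
    have e : (d * a)⁻¹ * (d * b) = a⁻¹ * b := by group
    rwa [e]
  have hterm : ∀ q : ↥N ⧸ (K ⊓ N).subgroupOf N,
      ρ.dual ⟨n', hn'.1⟩ (F (Quotient.out q)) = F (d * Quotient.out q) := by
    intro q
    have e1 : m₀ * ↑(d * Quotient.out q) = ↑(⟨n', hn'.1⟩ : ↥K) * (m₀ * ↑(Quotient.out q)) := by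
      show m₀ * ((m₀⁻¹ * n' * m₀) * ↑(Quotient.out q)) = n' * (m₀ * ↑(Quotient.out q))
      group
    rw [hFdef]
    show ρ.dual ⟨n', hn'.1⟩ (Φ (m₀ * ↑(Quotient.out q)) l) = Φ (m₀ * ↑(d * Quotient.out q)) l
    rw [e1]
    have h2 : Φ (↑(⟨n', hn'.1⟩ : ↥K) * (m₀ * ↑(Quotient.out q)))
        = ρ.dual ⟨n', hn'.1⟩ * Φ (m₀ * ↑(Quotient.out q)) := hecke_left hΦ _ _ hn'.1
    rw [h2]
    rfl
  show ρ.dual ⟨n', hn'.1⟩ (∑ᶠ q, F (Quotient.out q)) = ∑ᶠ q, F (Quotient.out q)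
  calc ρ.dual ⟨n', hn'.1⟩ (∑ᶠ q, F (Quotient.out q))
      = ∑ᶠ q, ρ.dual ⟨n', hn'.1⟩ (F (Quotient.out q)) :=
        AddMonoidHom.map_finsum (ρ.dual ⟨n', hn'.1⟩).toAddMonoidHom
          (fin_support_apply hΦ hA1' m₀ l)
    _ = ∑ᶠ q, F (d * Quotient.out q) := finsum_congr hterm
    _ = ∑ᶠ q, F (⇑(Equiv.mulLeft d) (Quotient.out q)) := by
        refine finsum_congr (fun q => ?_)
        rw [Equiv.coe_mulLeft]
    _ = ∑ᶠ q, F (Quotient.out q) := by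
        refine finsum_reindex F (coset_const hΦ hl m₀) ⇑(Equiv.mulLeft d)
          (quotMapEquiv _ (Equiv.mulLeft d)
            (fun a b h => by simpa using hgen d a b h)
            (fun a b h => by
              simp only [Equiv.mulLeft_symm, Equiv.coe_mulLeft]
              exact hgen d⁻¹ a b h)) (fun q => ?_)
        conv_rhs => rw [← QuotientGroup.out_eq' q]
        rw [quotMapEquiv_mk]

/-- Part (a), `K∩M`-bi-equivariance. -/
lemma mSat_equiv {M : Subgroup G} (hΦ : Φ ∈ Hecke K ρ.dual) {l : Module.Dual C V}
    (hl : l ∈ dualInv K N ρ)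
    (hA1' : ∀ g : G, ∃ S : Finset G, ∀ x : G,
      (∃ k ∈ K, ∃ k' ∈ K, x = k * g * k') → ∃ s ∈ S, ∃ k ∈ K, x = s * k)
    (hnorm : ∀ (m : ↥(K ⊓ M)) (n' : G), n' ∈ K ⊓ N → ↑m * n' * (↑m)⁻¹ ∈ K ⊓ N)
    (hNn : ∀ k ∈ K ⊓ M, ∀ n ∈ N, k * n * k⁻¹ ∈ N)
    (m : ↥M) (k k' : G) (hk : k ∈ K ⊓ M) (hk' : k' ∈ K ⊓ M) :
    ∑ᶠ q : ↥N ⧸ (K ⊓ N).subgroupOf N,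
        Φ (↑(⟨k, hk.2⟩ * m * ⟨k', hk'.2⟩ : ↥M) * ↑(Quotient.out q)) l
      = ρ.dual ⟨k, hk.1⟩ (∑ᶠ q : ↥N ⧸ (K ⊓ N).subgroupOf N,
          Φ (↑m * ↑(Quotient.out q)) (ρ.dual ⟨k', hk'.1⟩ l)) := by
  set l' : Module.Dual C V := ρ.dual ⟨k', hk'.1⟩ l with hl'def
  have hl' : l' ∈ dualInv K N ρ := dualInv_dual hnorm hl k' hk'
  set F : ↥N → Module.Dual C V := fun n => Φ (↑m * ↑n) l' with hFdef
  have hk'inv : k'⁻¹ ∈ K ⊓ M := (K ⊓ M).inv_mem hk'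
  let cj : ↥N ≃ ↥N :=
    { toFun := fun n => ⟨k' * ↑n * k'⁻¹, hNn k' hk' ↑n n.2⟩
      invFun := fun n => ⟨k'⁻¹ * ↑n * k', by
        have := hNn k'⁻¹ hk'inv ↑n n.2
        simpa using this⟩
      left_inv := fun n => by ext; show k'⁻¹ * (k' * ↑n * k'⁻¹) * k' = ↑n; group
      right_inv := fun n => by ext; show k' * (k'⁻¹ * ↑n * k') * k'⁻¹ = ↑n; group }
  have hcjcoe : ∀ n : ↥N, (↑(cj n) : G) = k' * ↑n * k'⁻¹ := fun n => rfl
  have hterm : ∀ q : ↥N ⧸ (K ⊓ N).subgroupOf N,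
      Φ (↑(⟨k, hk.2⟩ * m * ⟨k', hk'.2⟩ : ↥M) * ↑(Quotient.out q)) l
        = ρ.dual ⟨k, hk.1⟩ (F (cj (Quotient.out q))) := by
    intro q
    have e1 : (↑(⟨k, hk.2⟩ * m * ⟨k', hk'.2⟩ : ↥M) : G) * ↑(Quotient.out q)
        = ↑(⟨k, hk.1⟩ : ↥K) * (↑m * ↑(cj (Quotient.out q))) * ↑(⟨k', hk'.1⟩ : ↥K) := by
      show (k * ↑m * k') * ↑(Quotient.out q)
          = k * (↑m * (k' * ↑(Quotient.out q) * k'⁻¹)) * k'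
      group
    rw [e1, (hecke_cases hΦ).1 ⟨k, hk.1⟩ ⟨k', hk'.1⟩ (↑m * ↑(cj (Quotient.out q)))]
    rfl
  have hfin : (Function.support fun q : ↥N ⧸ (K ⊓ N).subgroupOf N =>
      F (cj (Quotient.out q))).Finite := by
    apply (fin_support hΦ hA1' (↑m * k')).subset
    intro q hq
    simp only [Function.mem_support] at hq
    simp only [Set.mem_setOf_eq]
    intro h0
    apply hq
    have e2 : ↑m * ↑(cj (Quotient.out q)) = ((↑m * k') * ↑(Quotient.out q)) * k'⁻¹ := by
      rw [hcjcoe]; group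
    rw [hFdef]
    show Φ (↑m * ↑(cj (Quotient.out q))) l' = 0
    rw [e2, (hecke_ne_zero hΦ _ _ (K.inv_mem hk'.1)).2 h0]
    simp
  have hreindex : ∑ᶠ q : ↥N ⧸ (K ⊓ N).subgroupOf N, F (cj (Quotient.out q))
      = ∑ᶠ q : ↥N ⧸ (K ⊓ N).subgroupOf N, F (Quotient.out q) := by
    have hc : ∀ a b : ↥N, a⁻¹ * b ∈ (K ⊓ N).subgroupOf N →
        (cj a)⁻¹ * (cj b) ∈ (K ⊓ N).subgroupOf N := by
      intro a b h
      rw [Subgroup.mem_subgroupOf] at h ⊢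
      have e3 : (↑((cj a)⁻¹ * cj b) : G) = k' * ↑(a⁻¹ * b) * k'⁻¹ := by
        push_cast [hcjcoe]
        group
      rw [e3]
      exact hnorm ⟨k', hk'⟩ _ h
    have hc' : ∀ a b : ↥N, a⁻¹ * b ∈ (K ⊓ N).subgroupOf N →
        (cj.symm a)⁻¹ * (cj.symm b) ∈ (K ⊓ N).subgroupOf N := by
      intro a b h
      rw [Subgroup.mem_subgroupOf] at h ⊢
      have hcjs : ∀ n : ↥N, (↑(cj.symm n) : G) = k'⁻¹ * ↑n * k' := fun n => rfl
      have e3 : (↑((cj.symm a)⁻¹ * cj.symm b) : G) = k'⁻¹ * ↑(a⁻¹ * b) * k' := by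
        push_cast [hcjs]
        group
      rw [e3]
      have := hnorm ⟨k'⁻¹, hk'inv⟩ _ h
      simpa using this
    refine finsum_reindex F (coset_const hΦ hl' ↑m) ⇑cj
      (quotMapEquiv _ cj hc hc') (fun q => ?_)
    conv_rhs => rw [← QuotientGroup.out_eq' q]
    rw [quotMapEquiv_mk]
  calc ∑ᶠ q : ↥N ⧸ (K ⊓ N).subgroupOf N,
      Φ (↑(⟨k, hk.2⟩ * m * ⟨k', hk'.2⟩ : ↥M) * ↑(Quotient.out q)) l
      = ∑ᶠ q : ↥N ⧸ (K ⊓ N).subgroupOf N, ρ.dual ⟨k, hk.1⟩ (F (cj (Quotient.out q))) :=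
        finsum_congr hterm
    _ = ρ.dual ⟨k, hk.1⟩ (∑ᶠ q : ↥N ⧸ (K ⊓ N).subgroupOf N, F (cj (Quotient.out q))) :=
        (AddMonoidHom.map_finsum (ρ.dual ⟨k, hk.1⟩).toAddMonoidHom hfin).symm
    _ = ρ.dual ⟨k, hk.1⟩ (∑ᶠ q : ↥N ⧸ (K ⊓ N).subgroupOf N, F (Quotient.out q)) := by
        rw [hreindex]

/-- Part (b): comparison of the two Satake-type maps. -/
lemma part_b {V : Type} [AddCommGroup V] [Module C V] [FiniteDimensional C V]
    {K N : Subgroup G} {ρ : Representation C ↥K V}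
    {Φ : G → Module.End C (Module.Dual C V)}
    (hΦ : Φ ∈ Hecke K ρ.dual)
    (hA1' : ∀ g : G, ∃ S : Finset G, ∀ x : G,
      (∃ k ∈ K, ∃ k' ∈ K, x = k * g * k') → ∃ s ∈ S, ∃ k ∈ K, x = s * k)
    {l : Module.Dual C V} (hl : l ∈ dualInv K N ρ) (m₀ : G) (v : V) :
    l (∑ᶠ q : Quotient (QuotientGroup.rightRel ((K ⊓ N).subgroupOf N)),
        transEnd (Φ ((↑(Quotient.out q) * m₀)⁻¹)) v)
      = (∑ᶠ q : ↥N ⧸ (K ⊓ N).subgroupOf N, Φ (m₀⁻¹ * ↑(Quotient.out q)) l) v := by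
  set e := QuotientGroup.quotientRightRelEquivQuotientLeftRel ((K ⊓ N).subgroupOf N) with he_def
  have he : ∀ q' : Quotient (QuotientGroup.rightRel ((K ⊓ N).subgroupOf N)),
      (QuotientGroup.mk ((Quotient.out q')⁻¹ : ↥N) : ↥N ⧸ (K ⊓ N).subgroupOf N) = e q' := by
    intro q'
    conv_rhs => rw [← Quotient.out_eq q']
    rfl
  -- the coset element relating `(out q')⁻¹` and `out (e q')`
  have hcos : ∀ q' : Quotient (QuotientGroup.rightRel ((K ⊓ N).subgroupOf N)),
      ((Quotient.out (e q'))⁻¹ * (Quotient.out q')⁻¹ : ↥N) ∈ (K ⊓ N).subgroupOf N := by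
    intro q'
    apply QuotientGroup.eq.1
    rw [QuotientGroup.out_eq', he q']
  have hinv : ∀ q' : Quotient (QuotientGroup.rightRel ((K ⊓ N).subgroupOf N)),
      ((↑(Quotient.out q') : G) * m₀)⁻¹
      = (m₀⁻¹ * ↑(Quotient.out (e q')))
        * ↑(((Quotient.out (e q'))⁻¹ * (Quotient.out q')⁻¹ : ↥N)) := by
    intro q'
    push_cast
    group
  have hterm : ∀ q' : Quotient (QuotientGroup.rightRel ((K ⊓ N).subgroupOf N)),
      l (transEnd (Φ (((↑(Quotient.out q') : G) * m₀)⁻¹)) v)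
      = (Φ (m₀⁻¹ * ↑(Quotient.out (e q'))) l) v := by
    intro q'
    rw [transEnd_apply]
    congr 1
    rw [hinv q']
    exact hecke_coset hΦ hl _ _ (Subgroup.mem_subgroupOf.1 (hcos q'))
  have hfin : (Function.support fun q' : Quotient (QuotientGroup.rightRel ((K ⊓ N).subgroupOf N)) =>
      transEnd (Φ (((↑(Quotient.out q') : G) * m₀)⁻¹)) v).Finite := by
    apply Set.Finite.subset (Set.Finite.preimage (e.injective.injOn)
      (fin_support hΦ hA1' m₀⁻¹))
    intro q' hq'
    simp only [Function.mem_support] at hq'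
    simp only [Set.mem_preimage, Set.mem_setOf_eq]
    intro h0
    apply hq'
    have h1 : Φ ((↑(Quotient.out q') * m₀)⁻¹) = 0 := by
      rw [hinv q']
      exact (hecke_ne_zero hΦ _ _ (Subgroup.mem_subgroupOf.1 (hcos q')).1).2 h0
    rw [h1, transEnd_zero]
    rfl
  calc l (∑ᶠ q' : Quotient (QuotientGroup.rightRel ((K ⊓ N).subgroupOf N)),
        transEnd (Φ (((↑(Quotient.out q') : G) * m₀)⁻¹)) v)
      = ∑ᶠ q' : Quotient (QuotientGroup.rightRel ((K ⊓ N).subgroupOf N)),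
          l (transEnd (Φ (((↑(Quotient.out q') : G) * m₀)⁻¹)) v) :=
        AddMonoidHom.map_finsum l.toAddMonoidHom hfin
    _ = ∑ᶠ q' : Quotient (QuotientGroup.rightRel ((K ⊓ N).subgroupOf N)),
          (Φ (m₀⁻¹ * ↑(Quotient.out (e q'))) l) v := finsum_congr hterm
    _ = ∑ᶠ q : ↥N ⧸ (K ⊓ N).subgroupOf N, (Φ (m₀⁻¹ * ↑(Quotient.out q)) l) v :=
        finsum_comp_equiv (f := fun q : ↥N ⧸ (K ⊓ N).subgroupOf N =>
          (Φ (m₀⁻¹ * ↑(Quotient.out q)) l) v) e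
    _ = (∑ᶠ q : ↥N ⧸ (K ⊓ N).subgroupOf N, Φ (m₀⁻¹ * ↑(Quotient.out q)) l) v := by
        refine (AddMonoidHom.map_finsum
          (AddMonoidHom.mk' (fun f : Module.Dual C V => f v) (fun f g => rfl)) ?_).symm
        exact fin_support_apply hΦ hA1' m₀⁻¹ l

/-- Part (a), finite double-coset support of `𝒮(Φ)`. -/
lemma mSat_support {M P : Subgroup G} (hΦ : Φ ∈ Hecke K ρ.dual)
    (hMP : M ≤ P) (hNP : N ≤ P)
    (hNnormal : ∀ p ∈ P, ∀ n' ∈ N, p * n' * p⁻¹ ∈ N)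
    (hMN : M ⊓ N = ⊥)
    (hPprod : ∀ p ∈ P, ∃ m ∈ M, ∃ n' ∈ N, p = m * n')
    (hG : ∀ g : G, ∃ k ∈ K, ∃ p ∈ P, g = k * p)
    (hKP : ∀ x ∈ K ⊓ P, ∃ m ∈ K ⊓ M, ∃ n' ∈ K ⊓ N, x = m * n')
    (hA1 : ∀ g : G, ∃ S : Finset G, ∀ x : G,
      (∃ k ∈ K, ∃ k' ∈ K, x = k * g * k') → ∃ s ∈ S, ∃ k ∈ K, x = k * s) :
    ∃ S : Finset ↥M, ∀ m : ↥M,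
      (∃ l ∈ dualInv K N ρ,
        (∑ᶠ q : ↥N ⧸ (K ⊓ N).subgroupOf N, Φ (↑m * ↑(Quotient.out q)) l) ≠ 0) →
      ∃ s ∈ S, ∃ k ∈ K ⊓ M, ∃ k' ∈ K ⊓ M, (↑m : G) = k * ↑s * k' := by
  obtain ⟨hΦ1, S, hS⟩ := hecke_cases hΦ
  choose T hT using hA1
  have key : ∀ g : G, Φ g ≠ 0 → ∃ t ∈ S.biUnion T, ∃ k ∈ K, g = k * t := by
    intro g hg
    obtain ⟨s, hs, k, hk, k', hk', hgeq⟩ := hS g hg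
    obtain ⟨t, ht, k₂, hk₂, hx⟩ := hT s g ⟨k, hk, k', hk', hgeq⟩
    exact ⟨t, Finset.mem_biUnion.2 ⟨s, hs, ht⟩, k₂, hk₂, hx⟩
  choose kf hkf pf hpf hgeq using hG
  have hPP : ∀ t : G, pf t ∈ P := hpf
  choose mf hmf nf hnf hpeq using fun g => hPprod (pf g) (hpf g)
  refine ⟨(S.biUnion T).image (fun t => (⟨mf t, hmf t⟩ : ↥M)), ?_⟩
  rintro m ⟨l, hl, hne⟩
  have hex : ∃ q : ↥N ⧸ (K ⊓ N).subgroupOf N, Φ (↑m * ↑(Quotient.out q)) l ≠ 0 := by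
    by_contra h
    push_neg at h
    exact hne (finsum_eq_zero_of_forall_eq_zero h)
  obtain ⟨q, hq⟩ := hex
  have hΦne : Φ (↑m * ↑(Quotient.out q)) ≠ 0 := fun h0 => hq (by rw [h0]; rfl)
  obtain ⟨t, htT, k, hkK, hgt⟩ := key _ hΦne
  set nq : ↥N := Quotient.out q with hnq
  set κ : G := k * kf t with hκdef
  have hκK : κ ∈ K := K.mul_mem hkK (hkf t)
  have hgeq2 : (↑m : G) * ↑nq = κ * (mf t * nf t) := by
    rw [hgt]
    conv_lhs => rw [hgeq t, hpeq t]
    rw [hκdef]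
    group
  have hκP : κ ∈ P := by
    have hκ2 : κ = ((↑m : G) * ↑nq) * (nf t)⁻¹ * (mf t)⁻¹ := by rw [hgeq2]; group
    rw [hκ2]
    exact P.mul_mem (P.mul_mem (P.mul_mem (hMP m.2) (hNP nq.2))
      (P.inv_mem (hNP (hnf t)))) (P.inv_mem (hMP (hmf t)))
  obtain ⟨a, haKM, b, hbKN, hab⟩ := hKP κ ⟨hκK, hκP⟩
  set m₂ : G := a * mf t with hm₂def
  set n₂ : G := ((mf t)⁻¹ * b * mf t) * nf t with hn₂def
  have hm₂M : m₂ ∈ M := M.mul_mem haKM.2 (hmf t)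
  have hn₂N : n₂ ∈ N := by
    refine N.mul_mem ?_ (hnf t)
    have h5 := hNnormal (mf t)⁻¹ (P.inv_mem (hMP (hmf t))) b hbKN.2
    simpa [mul_assoc] using h5
  have heq3 : (↑m : G) * ↑nq = m₂ * n₂ := by
    rw [hgeq2, hab, hm₂def, hn₂def]
    group
  have hMNel : m₂⁻¹ * ↑m ∈ M ⊓ N := by
    constructor
    · exact M.mul_mem (M.inv_mem hm₂M) m.2
    · have h4 : m₂⁻¹ * (↑m : G) = n₂ * (↑nq)⁻¹ := by
        have h6 : (↑m : G) = m₂ * n₂ * (↑nq)⁻¹ := by rw [← heq3]; group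
        rw [h6]; group
      rw [h4]
      exact N.mul_mem hn₂N (N.inv_mem nq.2)
  rw [hMN] at hMNel
  have hm_eq : m₂ = (↑m : G) := inv_mul_eq_one.1 (Subgroup.mem_bot.1 hMNel)
  refine ⟨⟨mf t, hmf t⟩, Finset.mem_image.2 ⟨t, htT, rfl⟩, a, haKM, 1, (K ⊓ M).one_mem, ?_⟩
  rw [mul_one, ← hm_eq, hm₂def]

end Parts

/-!
STATEMENT 6.  `C` a field, `G` a group, `K, P = M ⋉ N` as before, with (A1) for `(G,K)`
and `(M, K∩M)`, and `V` a finite-dimensional `C[K]`-module; `V* = Dual V` carries the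
contragredient action `ρ.dual`, and `(V*)^{N∩K}` (`dualInv`) identifies with the dual of
`V_{K∩N}`, so that `l ∈ (V*)^{N∩K}` is applied directly to elements of `V` in place of
their images in `V_{K∩N}`.  `ι(Φ)(g) = (Φ(g⁻¹))ᵗ` (`transEnd`), and
`𝒮'(ι(Φ))(m)(v̄) = Σ_{(N∩K)n ∈ (N∩K)\N} image of (ιΦ)(nm)v`.

(a) For `Φ ∈ H(G,K,V*)` and `m ∈ M`, the formula
    `𝒮(Φ)(m)(λ) = Σ_{n(N∩K) ∈ N/(N∩K)} Φ(mn)(λ)` (`mSat`) has finitely many nonzero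
    terms, is independent of the coset representatives, maps `(V*)^{N∩K}` into itself,
    and defines an element `𝒮(Φ)` of `H(M, K∩M, (V*)^{N∩K})` (it is linear in `λ`,
    `K∩M`-bi-equivariant, and supported on finitely many double cosets).
(b) `λ(𝒮'(ι(Φ))(m)(v̄)) = (𝒮(Φ)(m⁻¹)(λ))(v)`, i.e. `ι_M ∘ 𝒮 = 𝒮' ∘ ι`.
-/
theorem statement6 {V : Type} [AddCommGroup V] [Module C V] [FiniteDimensional C V]
    (K P M N : Subgroup G)
    (hMP : M ≤ P) (hNP : N ≤ P)
    (hNnormal : ∀ p ∈ P, ∀ n' ∈ N, p * n' * p⁻¹ ∈ N)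
    (hMN : M ⊓ N = ⊥)
    (hPprod : ∀ p ∈ P, ∃ m ∈ M, ∃ n' ∈ N, p = m * n')
    (hG : ∀ g : G, ∃ k ∈ K, ∃ p ∈ P, g = k * p)
    (hKP : ∀ x ∈ K ⊓ P, ∃ m ∈ K ⊓ M, ∃ n' ∈ K ⊓ N, x = m * n')
    (hnorm : ∀ (m : ↥(K ⊓ M)) (n' : G), n' ∈ K ⊓ N → ↑m * n' * (↑m)⁻¹ ∈ K ⊓ N)
    (hA1 : ∀ g : G, ∃ S : Finset G, ∀ x : G,
      (∃ k ∈ K, ∃ k' ∈ K, x = k * g * k') → ∃ s ∈ S, ∃ k ∈ K, x = k * s)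
    (hA1' : ∀ g : G, ∃ S : Finset G, ∀ x : G,
      (∃ k ∈ K, ∃ k' ∈ K, x = k * g * k') → ∃ s ∈ S, ∃ k ∈ K, x = s * k)
    (hA1M : ∀ m : ↥M, ∃ S : Finset ↥M, ∀ x : ↥M,
      (∃ k ∈ (K ⊓ M).subgroupOf M, ∃ k' ∈ (K ⊓ M).subgroupOf M, x = k * m * k') →
      ∃ s ∈ S, ∃ k ∈ (K ⊓ M).subgroupOf M, x = k * s)
    (ρ : Representation C ↥K V) :
    -- `𝒮(Φ)(m)(λ) := Σ_{n(N∩K) ∈ N/(N∩K)} Φ(mn)(λ)`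
    let mSat : (G → Module.End C (Module.Dual C V)) → ↥M →
        Module.Dual C V → Module.Dual C V :=
      fun Φ m l => ∑ᶠ q : ↥N ⧸ (K ⊓ N).subgroupOf N,
        Φ ((↑m : G) * ↑(Quotient.out q)) l
    -- (a) the sum has finitely many nonzero terms ...
    (∀ Φ ∈ Hecke K ρ.dual, ∀ m : ↥M, ∀ l ∈ dualInv K N ρ,
      {q : ↥N ⧸ (K ⊓ N).subgroupOf N |
        Φ ((↑m : G) * ↑(Quotient.out q)) l ≠ 0}.Finite) ∧
    -- ... and is independent of the choice of the coset representatives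
    (∀ Φ ∈ Hecke K ρ.dual, ∀ m : ↥M, ∀ l ∈ dualInv K N ρ,
      ∀ rep : ↥N ⧸ (K ⊓ N).subgroupOf N → ↥N,
        (∀ q : ↥N ⧸ (K ⊓ N).subgroupOf N, QuotientGroup.mk (rep q) = q) →
        ∑ᶠ q : ↥N ⧸ (K ⊓ N).subgroupOf N, Φ ((↑m : G) * ↑(rep q)) l = mSat Φ m l) ∧
    -- it maps `(V*)^{N∩K}` into itself ...
    (∀ Φ ∈ Hecke K ρ.dual, ∀ m : ↥M, ∀ l ∈ dualInv K N ρ,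
      mSat Φ m l ∈ dualInv K N ρ) ∧
    -- ... is linear in λ ...
    (∀ Φ ∈ Hecke K ρ.dual, ∀ m : ↥M, ∀ l ∈ dualInv K N ρ, ∀ l' ∈ dualInv K N ρ,
      mSat Φ m (l + l') = mSat Φ m l + mSat Φ m l') ∧
    (∀ Φ ∈ Hecke K ρ.dual, ∀ m : ↥M, ∀ c : C, ∀ l ∈ dualInv K N ρ,
      mSat Φ m (c • l) = c • mSat Φ m l) ∧
    -- ... is K∩M-bi-equivariant ...
    (∀ Φ ∈ Hecke K ρ.dual, ∀ m : ↥M, ∀ (k k' : G) (hk : k ∈ K ⊓ M) (hk' : k' ∈ K ⊓ M),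
      ∀ l ∈ dualInv K N ρ,
      mSat Φ (⟨k, hk.2⟩ * m * ⟨k', hk'.2⟩) l
        = ρ.dual ⟨k, hk.1⟩ (mSat Φ m (ρ.dual ⟨k', hk'.1⟩ l))) ∧
    -- ... and is supported on finitely many double cosets of K∩M, so that 𝒮(Φ) defines
    -- an element of H(M, K∩M, (V*)^{N∩K})
    (∀ Φ ∈ Hecke K ρ.dual, ∃ S : Finset ↥M, ∀ m : ↥M,
      (∃ l ∈ dualInv K N ρ, mSat Φ m l ≠ 0) →
      ∃ s ∈ S, ∃ k ∈ K ⊓ M, ∃ k' ∈ K ⊓ M, (↑m : G) = k * ↑s * k') ∧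
    -- (b) comparison of 𝒮 and 𝒮' : λ(𝒮'(ι(Φ))(m)(v̄)) = (𝒮(Φ)(m⁻¹)(λ))(v)
    (∀ Φ ∈ Hecke K ρ.dual, ∀ m : ↥M, ∀ v : V, ∀ l ∈ dualInv K N ρ,
      l (∑ᶠ q : Quotient (QuotientGroup.rightRel ((K ⊓ N).subgroupOf N)),
          transEnd (Φ (((↑(Quotient.out q) : G) * ↑m)⁻¹)) v)
        = (mSat Φ m⁻¹ l) v) := by
  intro mSat
  refine ⟨?_, ?_, ?_, ?_, ?_, ?_, ?_, ?_⟩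
  · -- finiteness of the sum
    intro Φ hΦ m l hl
    apply (fin_support hΦ hA1' (↑m : G)).subset
    intro q hq
    simp only [Set.mem_setOf_eq] at hq ⊢
    intro h0
    exact hq (by rw [h0]; rfl)
  · -- independence of representatives
    intro Φ hΦ m l hl rep hrep
    show ∑ᶠ q : ↥N ⧸ (K ⊓ N).subgroupOf N, Φ ((↑m : G) * ↑(rep q)) l
        = ∑ᶠ q : ↥N ⧸ (K ⊓ N).subgroupOf N, Φ ((↑m : G) * ↑(Quotient.out q)) l
    have hstep : ∀ q : ↥N ⧸ (K ⊓ N).subgroupOf N,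
        Φ ((↑m : G) * ↑(rep q)) l
          = Φ ((↑m : G) * ↑(rep (QuotientGroup.mk (Quotient.out q)))) l := by
      intro q; rw [QuotientGroup.out_eq']
    rw [finsum_congr hstep]
    exact finsum_reindex (fun n : ↥N => Φ ((↑m : G) * ↑n) l) (coset_const hΦ hl (↑m : G))
      (fun n => rep (QuotientGroup.mk n)) (Equiv.refl _)
      (fun q => by
        show (QuotientGroup.mk (rep (QuotientGroup.mk (Quotient.out q)))
          : ↥N ⧸ (K ⊓ N).subgroupOf N) = q
        rw [QuotientGroup.out_eq']
        exact hrep q)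
  · -- stability of dualInv
    intro Φ hΦ m l hl
    exact mSat_stable hΦ hl hA1' (↑m : G) (fun n' hn' => by
      have h := hNnormal (↑m : G)⁻¹ (P.inv_mem (hMP m.2)) n' hn'.2
      simpa using h)
  · -- additivity
    intro Φ hΦ m l hl l' hl'
    show ∑ᶠ q : ↥N ⧸ (K ⊓ N).subgroupOf N, Φ ((↑m : G) * ↑(Quotient.out q)) (l + l')
        = (∑ᶠ q : ↥N ⧸ (K ⊓ N).subgroupOf N, Φ ((↑m : G) * ↑(Quotient.out q)) l)
          + ∑ᶠ q : ↥N ⧸ (K ⊓ N).subgroupOf N, Φ ((↑m : G) * ↑(Quotient.out q)) l'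
    rw [finsum_congr (fun q : ↥N ⧸ (K ⊓ N).subgroupOf N =>
      map_add (Φ ((↑m : G) * ↑(Quotient.out q))) l l')]
    exact finsum_add_distrib (fin_support_apply hΦ hA1' (↑m : G) l)
      (fin_support_apply hΦ hA1' (↑m : G) l')
  · -- homogeneity
    intro Φ hΦ m c l hl
    show ∑ᶠ q : ↥N ⧸ (K ⊓ N).subgroupOf N, Φ ((↑m : G) * ↑(Quotient.out q)) (c • l)
        = c • ∑ᶠ q : ↥N ⧸ (K ⊓ N).subgroupOf N, Φ ((↑m : G) * ↑(Quotient.out q)) l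
    rw [finsum_congr (fun q : ↥N ⧸ (K ⊓ N).subgroupOf N =>
      map_smul (Φ ((↑m : G) * ↑(Quotient.out q))) c l)]
    exact (smul_finsum' c (fin_support_apply hΦ hA1' (↑m : G) l)).symm
  · -- bi-equivariance
    intro Φ hΦ m k k' hk hk' l hl
    exact mSat_equiv hΦ hl hA1' hnorm
      (fun k₀ hk₀ n hn => hNnormal k₀ (hMP hk₀.2) n hn) m k k' hk hk'
  · -- finite double-coset support
    intro Φ hΦ
    exact mSat_support hΦ hMP hNP hNnormal hMN hPprod hG hKP hA1
  · -- part (b)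
    intro Φ hΦ m v l hl
    exact part_b hΦ hA1' hl (↑m : G) v


end Paper
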